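/- Let x ∈ ℝ^n be Gaussian with x ∼ N(m, L L^*) and let y given x satisfy y ∼ N(A x + b, B B^*), with A ∈ ℝ^{k×n}, B ∈ ℝ^{k×r}. Suppose the matrix [[A L, B],[L, 0]] has an LQ-type factorization [[A L, B],[L, 0]] = [[L₁, 0],[L_⋆, L₂]] · [T₁; T₂] with [T₁; T₂] having orthonormal rows (T₁ T₁^* = I, T₂ T₂^* = I, T₁ T₂^* = 0) and L₁ invertible. Then: (i) the marginal distribution of y is N(A m + b, L₁ L₁^*); (ii) with K := L_⋆ L₁^{-1}, the conditional distribution of x given y is N(m − K(A m + b − y), L₂ L₂^*). In particular L₁ L₁^* = A L L^* A^* + B B^*, K L₁ L₁^* = L L^* A^*, and L₂ L₂^* = L L^* − K L₁ L₁^* K^*. -/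

import Mathlib

open Matrix

/-- Gaussian conditioning in square-root form: with prior `x ∼ N(m, L L^*)` and likelihood
`y | x ∼ N(A x + b, B B^*)`, if `[[A L, B],[L, 0]] = [[L₁, 0],[L_⋆, L₂]]·[T₁; T₂]` with
`[T₁; T₂]` having orthonormal rows and `L₁` invertible, and `K = L_⋆ L₁⁻¹`, then the
marginal of `y` is `N(A m + b, L₁ L₁^*)` and the conditional of `x` given `y` is
`N(m − K(A m + b − y), L₂ L₂^*)`; i.e. `L₁ L₁^* = A L L^* A^* + B B^*`,
`K L₁ L₁^* = L L^* A^*`, `L₂ L₂^* = L L^* − K L₁ L₁^* K^*`, and the conditional-mean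
formula matches the classical Gaussian conditioning formula for every `y`. -/
theorem stmt_4 (n k r : ℕ)
    (b : Fin k → ℝ) (mx : Fin n → ℝ)
    (L : Matrix (Fin n) (Fin n) ℝ)
    (A : Matrix (Fin k) (Fin n) ℝ)
    (B : Matrix (Fin k) (Fin r) ℝ)
    (L₁ : Matrix (Fin k) (Fin k) ℝ)
    (Ls : Matrix (Fin n) (Fin k) ℝ)
    (L₂ : Matrix (Fin n) (Fin n) ℝ)
    (T₁ : Matrix (Fin k) (Fin n ⊕ Fin r) ℝ)
    (T₂ : Matrix (Fin n) (Fin n ⊕ Fin r) ℝ)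
    (hfac : Matrix.fromBlocks (A * L) B L (0 : Matrix (Fin n) (Fin r) ℝ)
        = Matrix.fromBlocks L₁ 0 Ls L₂ * Matrix.fromRows T₁ T₂)
    (hT₁ : T₁ * T₁ᵀ = 1) (hT₂ : T₂ * T₂ᵀ = 1) (hT₁₂ : T₁ * T₂ᵀ = 0)
    (hL₁ : IsUnit L₁)
    (K : Matrix (Fin n) (Fin k) ℝ) (hK : K = Ls * L₁⁻¹) :
    -- (i) marginal covariance of y
    L₁ * L₁ᵀ = A * (L * Lᵀ) * Aᵀ + B * Bᵀ
      -- (ii) gain identity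
      ∧ K * (L₁ * L₁ᵀ) = (L * Lᵀ) * Aᵀ
      -- conditional covariance
      ∧ L₂ * L₂ᵀ = L * Lᵀ - K * (L₁ * L₁ᵀ) * Kᵀ
      -- conditional mean matches the classical Gaussian conditioning formula
      ∧ ∀ y : Fin k → ℝ,
          mx - K *ᵥ (A *ᵥ mx + b - y)
            = mx + ((L * Lᵀ) * Aᵀ) *ᵥ
                ((A * (L * Lᵀ) * Aᵀ + B * Bᵀ)⁻¹ *ᵥ (y - A *ᵥ mx - b)) := by
  have hT₂₁ : T₂ * T₁ᵀ = 0 := by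
    have := congrArg Matrix.transpose hT₁₂
    simpa [Matrix.transpose_mul] using this
  have hTT : Matrix.fromRows T₁ T₂ * (Matrix.fromRows T₁ T₂)ᵀ = 1 := by
    rw [Matrix.transpose_fromRows, Matrix.fromRows_mul_fromCols, hT₁, hT₂, hT₁₂, hT₂₁,
      ← Matrix.fromBlocks_one]
  have hMM := congrArg (fun M => M * Mᵀ) hfac
  simp only [Matrix.transpose_mul] at hMM
  rw [show (Matrix.fromBlocks L₁ 0 Ls L₂ * Matrix.fromRows T₁ T₂) *
      ((Matrix.fromRows T₁ T₂)ᵀ * (Matrix.fromBlocks L₁ 0 Ls L₂)ᵀ)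
      = Matrix.fromBlocks L₁ 0 Ls L₂ *
        (Matrix.fromRows T₁ T₂ * (Matrix.fromRows T₁ T₂)ᵀ) *
        (Matrix.fromBlocks L₁ 0 Ls L₂)ᵀ by simp only [Matrix.mul_assoc], hTT, Matrix.mul_one] at hMM
  rw [Matrix.fromBlocks_transpose, Matrix.fromBlocks_transpose,
    Matrix.fromBlocks_multiply, Matrix.fromBlocks_multiply] at hMM
  simp only [Matrix.transpose_zero, Matrix.transpose_mul, Matrix.mul_zero, Matrix.zero_mul,
    add_zero, zero_add] at hMM
  rw [Matrix.fromBlocks_inj] at hMM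
  obtain ⟨h11, h12, h21, h22⟩ := hMM
  have hL₁det : IsUnit L₁.det := (Matrix.isUnit_iff_isUnit_det _).mp hL₁
  have h1 : L₁ * L₁ᵀ = A * (L * Lᵀ) * Aᵀ + B * Bᵀ := by
    rw [← h11]; simp only [Matrix.mul_assoc]
  have h21' : Ls * L₁ᵀ = L * Lᵀ * Aᵀ := by
    rw [← h21]; simp only [Matrix.mul_assoc]
  have hinv : L₁ᵀ * L₁⁻¹ᵀ = 1 := by
    rw [← Matrix.transpose_mul, Matrix.nonsing_inv_mul _ hL₁det, Matrix.transpose_one]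
  have hKS : K * (L₁ * L₁ᵀ) = L * Lᵀ * Aᵀ := by
    rw [hK, Matrix.mul_assoc Ls, ← Matrix.mul_assoc L₁⁻¹,
      Matrix.nonsing_inv_mul _ hL₁det, Matrix.one_mul, h21']
  refine ⟨h1, hKS, ?_, ?_⟩
  · have hKK : K * (L₁ * L₁ᵀ) * Kᵀ = Ls * Lsᵀ := by
      rw [hKS, hK, Matrix.transpose_mul, ← h21', Matrix.mul_assoc, ← Matrix.mul_assoc L₁ᵀ,
        hinv, Matrix.one_mul]
    rw [hKK, h22]; abel
  · intro y
    have hSdet : IsUnit (L₁ * L₁ᵀ).det := by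
      rw [Matrix.det_mul, Matrix.det_transpose]; exact hL₁det.mul hL₁det
    have hKeq : L * Lᵀ * Aᵀ * (L₁ * L₁ᵀ)⁻¹ = K := by
      rw [← hKS, Matrix.mul_assoc _ (L₁ * L₁ᵀ), Matrix.mul_nonsing_inv _ hSdet, Matrix.mul_one]
    rw [← h1, Matrix.mulVec_mulVec, hKeq]
    have hv : y - A *ᵥ mx - b = -(A *ᵥ mx + b - y) := by
      funext i; simp; ring
    rw [hv, Matrix.mulVec_neg]
    funext i
    simp [sub_eq_add_neg]
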